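/- Suppose h ∈ 𝓗 and set λ₊ = S + h + λ₀. Then for every ϑ ∈ [ϑ₀, ϑ₀ + δ], the Kullback–Leibler divergence J is differentiable at ϑ with J′(ϑ) = λ₊·ln((S + λ₀)/(S·(1 − (ϑ − ϑ₀)/δ)^κ + λ₀)) + S·(1 − (ϑ − ϑ₀)/δ)^κ − S + I₂(ϑ), where I₂(ϑ) = ∫_{0}^{1 − (ϑ − ϑ₀)/δ} S·κ·x^{κ−1}·[(S + h)·(x + (ϑ − ϑ₀)/δ)^κ − S·x^κ]/(S·x^κ + λ₀) dx. -/

import Mathlib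

open MeasureTheory Real Set Filter

open scoped NNReal

/-- The cusp signal shape: `ψ(x) = (x/δ)^κ` for `0 < x < δ`, `1` for `x ≥ δ`, `0` for `x ≤ 0`. -/
noncomputable def psi (δ κ : ℝ) (x : ℝ) : ℝ :=
  if δ ≤ x then 1 else if 0 < x then (x / δ) ^ κ else 0

noncomputable def psid (δ κ : ℝ) (x : ℝ) : ℝ :=
  if 0 < x ∧ x < δ then κ / δ * (x / δ) ^ (κ - 1) else 0

section psi

variable {δ κ : ℝ} (hδ : 0 < δ) (hκ0 : 0 < κ) (hκ1 : κ < 1)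

include hδ in
lemma psi_of_nonpos (hx : x ≤ 0) : psi δ κ x = 0 := by
  unfold psi
  rw [if_neg (by linarith), if_neg (by linarith)]

lemma psi_of_ge (hx : δ ≤ x) : psi δ κ x = 1 := by
  unfold psi; rw [if_pos hx]

include hδ hκ0 in
lemma psi_of_mem (h0 : 0 ≤ x) (h1 : x ≤ δ) : psi δ κ x = (x / δ) ^ κ := by
  unfold psi
  rcases eq_or_lt_of_le h1 with rfl | h1
  · rw [if_pos le_rfl, div_self hδ.ne', Real.one_rpow]
  rcases eq_or_lt_of_le h0 with rfl | h0
  · rw [if_neg (by linarith), if_neg (by linarith), zero_div,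
      Real.zero_rpow hκ0.ne']
  · rw [if_neg (by linarith), if_pos h0]

include hδ hκ0 in
lemma psi_eq_min : psi δ κ x = min 1 ((max x 0 / δ) ^ κ) := by
  rcases le_or_gt x 0 with hx | hx
  · rw [psi_of_nonpos hδ hx, max_eq_right hx, zero_div, Real.zero_rpow hκ0.ne',
      min_eq_right zero_le_one]
  rcases le_or_gt δ x with hx' | hx'
  · rw [psi_of_ge hx', max_eq_left hx.le, min_eq_left]
    exact Real.one_le_rpow ((le_div_iff₀ hδ).2 (by linarith)) hκ0.le
  · rw [psi_of_mem hδ hκ0 hx.le hx'.le, max_eq_left hx.le, min_eq_right]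
    exact Real.rpow_le_one (by positivity) ((div_le_one hδ).2 hx'.le) hκ0.le

include hδ in
lemma psi_nonneg : 0 ≤ psi δ κ x := by
  unfold psi; split_ifs with h1 h2
  · exact zero_le_one
  · have : 0 < x / δ := by positivity
    positivity
  · exact le_rfl

include hδ hκ0 in
lemma psi_le_one : psi δ κ x ≤ 1 := by
  rw [psi_eq_min hδ hκ0]; exact min_le_left _ _

include hδ hκ0 in
lemma monotone_psi : Monotone (psi δ κ) := by
  intro x y hxy
  rw [psi_eq_min hδ hκ0, psi_eq_min hδ hκ0]
  exact min_le_min le_rfl (Real.rpow_le_rpow (by positivity)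
    (by gcongr) hκ0.le)

include hδ hκ0 in
lemma continuous_psi : Continuous (psi δ κ) := by
  have : (psi δ κ) = fun x => min 1 ((max x 0 / δ) ^ κ) :=
    funext fun x => psi_eq_min hδ hκ0
  rw [this]
  apply continuous_const.min
  apply Continuous.rpow_const ((continuous_id.max continuous_const).div_const δ)
  intro x; exact Or.inr hκ0.le

include hδ hκ0 in
lemma psi_le_rpow (hx : 0 ≤ x) : psi δ κ x ≤ (x / δ) ^ κ := by
  rw [psi_eq_min hδ hκ0, max_eq_left hx]; exact min_le_right _ _

lemma measurable_psi : Measurable (psi δ κ) := by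
  unfold psi
  exact Measurable.ite measurableSet_Ici measurable_const
    (Measurable.ite measurableSet_Ioi
      ((measurable_id.div_const δ).pow_const κ) measurable_const)


include hδ in
lemma hasDerivAt_rpow_div {x : ℝ} (hx : 0 < x) :
    HasDerivAt (fun y : ℝ => (y / δ) ^ κ) (κ / δ * (x / δ) ^ (κ - 1)) x := by
  have h1 : HasDerivAt (fun y : ℝ => y / δ) (1 / δ) x := by
    simpa using (hasDerivAt_id x).div_const δ
  have h2 : HasDerivAt (fun z : ℝ => z ^ κ) (κ * (x / δ) ^ (κ - 1)) (x / δ) :=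
    Real.hasDerivAt_rpow_const (Or.inl (div_pos hx hδ).ne')
  have := h2.comp x h1
  refine this.congr_deriv ?_
  ring

lemma psid_nonneg (hδ : 0 < δ) (hκ0 : 0 < κ) (x : ℝ) : 0 ≤ psid δ κ x := by
  unfold psid; split_ifs with hx
  · exact mul_nonneg (div_nonneg hκ0.le hδ.le)
      (Real.rpow_nonneg (div_nonneg hx.1.le hδ.le) _)
  · exact le_rfl

include hδ hκ0 hκ1 in
lemma psid_le_rpow {x : ℝ} (hx : 0 ≤ x) :
    psid δ κ x ≤ κ * δ ^ (-κ) * x ^ (κ - 1) := by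
  have hδκ : δ ^ (κ - 1) * δ = δ ^ κ := by
    nth_rewrite 2 [← Real.rpow_one δ]
    rw [← Real.rpow_add hδ]; norm_num
  unfold psid; split_ifs with hx'
  · obtain ⟨h0, h1⟩ := hx'
    rw [Real.div_rpow h0.le hδ.le]
    apply le_of_eq
    rw [div_mul_div_comm, mul_comm δ _, hδκ, Real.rpow_neg hδ.le]
    ring
  · rcases eq_or_lt_of_le hx with rfl | h0
    · simp [Real.zero_rpow (by linarith : κ - 1 ≠ 0)]
    · exact mul_nonneg (mul_nonneg hκ0.le (Real.rpow_nonneg hδ.le _))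
        (Real.rpow_pos_of_pos h0 _).le

lemma measurable_psid : Measurable (psid δ κ) := by
  unfold psid
  exact Measurable.ite (MeasurableSet.inter measurableSet_Ioi measurableSet_Iio)
    (measurable_const.mul ((measurable_id.div_const δ).pow_const (κ - 1)))
    measurable_const


end psi


-- helper: antitone of rpow with nonpositive exponent
lemma rpow_anti {x y p : ℝ} (hx : 0 < x) (hxy : x ≤ y) (hp : p ≤ 0) :
    y ^ p ≤ x ^ p := by
  have hy : 0 < y := lt_of_lt_of_le hx hxy
  rw [Real.rpow_def_of_pos hx, Real.rpow_def_of_pos hy]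
  exact Real.exp_le_exp.2 (mul_le_mul_of_nonpos_right
    (Real.log_le_log hx hxy) hp)

-- helper: |min c a - min c b| ≤ |a - b|
lemma abs_min_sub_min (c a b : ℝ) : |min c a - min c b| ≤ |a - b| := by
  have key : ∀ u v : ℝ, min c u - min c v ≤ |u - v| := by
    intro u v
    have h1 : min c u ≤ min (c + |u - v|) (v + |u - v|) :=
      min_le_min (le_add_of_nonneg_right (abs_nonneg _))
        (by linarith [le_abs_self (u - v)])
    have h2 : min (c + |u - v|) (v + |u - v|) = min c v + |u - v| :=
      min_add_add_right c v _ |>.symm ▸ rfl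
    calc min c u - min c v ≤ (min c v + |u - v|) - min c v := by
          rw [← min_add_add_right]; linarith [h1]
      _ = |u - v| := by ring
  rw [abs_sub_le_iff]
  exact ⟨key a b, by simpa [abs_sub_comm] using key b a⟩

-- helper : subadditivity of rpow
lemma rpow_add_le {x y p : ℝ} (hx : 0 ≤ x) (hy : 0 ≤ y) (hp0 : 0 ≤ p) (hp1 : p ≤ 1) :
    (x + y) ^ p ≤ x ^ p + y ^ p := by
  have h := NNReal.rpow_add_le_add_rpow x.toNNReal y.toNNReal hp0 hp1
  calc (x + y) ^ p = (((x.toNNReal + y.toNNReal) : ℝ≥0) : ℝ) ^ p := by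
        rw [NNReal.coe_add, Real.coe_toNNReal _ hx, Real.coe_toNNReal _ hy]
    _ = (((x.toNNReal + y.toNNReal) ^ p : ℝ≥0) : ℝ) := (NNReal.coe_rpow _ _).symm
    _ ≤ ((x.toNNReal ^ p + y.toNNReal ^ p : ℝ≥0) : ℝ) := by exact_mod_cast h
    _ = x ^ p + y ^ p := by
        rw [NNReal.coe_add, NNReal.coe_rpow, NNReal.coe_rpow,
          Real.coe_toNNReal _ hx, Real.coe_toNNReal _ hy]
section psider
variable {δ κ : ℝ} (hδ : 0 < δ) (hκ0 : 0 < κ) (hκ1 : κ < 1)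

include hδ hκ0 in
lemma hasDerivAt_psi {x : ℝ} (h0 : 0 < x) (hne : x ≠ δ) :
    HasDerivAt (psi δ κ) (psid δ κ x) x := by
  rcases lt_or_gt_of_ne hne with hlt | hgt
  · have hev : (fun y : ℝ => (y / δ) ^ κ) =ᶠ[nhds x] psi δ κ := by
      filter_upwards [Ioo_mem_nhds h0 hlt] with y hy
      exact (psi_of_mem hδ hκ0 hy.1.le hy.2.le).symm
    have := (hasDerivAt_rpow_div hδ h0).congr_of_eventuallyEq hev.symm
    have hval : psid δ κ x = κ / δ * (x / δ) ^ (κ - 1) := by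
      unfold psid; rw [if_pos ⟨h0, hlt⟩]
    rw [hval]; exact this
  · have hev : (fun _ : ℝ => (1 : ℝ)) =ᶠ[nhds x] psi δ κ := by
      filter_upwards [Ioi_mem_nhds hgt] with y hy
      exact (psi_of_ge (le_of_lt hy)).symm
    have := (hasDerivAt_const x (1 : ℝ)).congr_of_eventuallyEq hev.symm
    have hval : psid δ κ x = 0 := by
      unfold psid; rw [if_neg (by rintro ⟨-, h⟩; linarith)]
    rw [hval]; exact this

include hδ hκ0 in
lemma hasDerivWithinAt_psi_Ici {x : ℝ} (h0 : 0 < x) :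
    HasDerivWithinAt (psi δ κ) (psid δ κ x) (Ici x) x := by
  rcases ne_or_eq x δ with hne | heq
  · exact (hasDerivAt_psi hδ hκ0 h0 hne).hasDerivWithinAt
  · have hval : psid δ κ x = 0 := by
      unfold psid; rw [if_neg (by rintro ⟨-, h⟩; rw [heq] at h; exact lt_irrefl _ h)]
    rw [hval]
    refine (hasDerivWithinAt_const x _ (1 : ℝ)).congr (fun y hy => ?_) ?_
    · rw [psi_of_ge (heq ▸ hy)]
    · rw [psi_of_ge (le_of_eq heq.symm)]

include hδ hκ0 hκ1 in
lemma psi_abs_sub_le {c x y : ℝ} (hc : 0 < c) (hx : c ≤ x) (hy : c ≤ y) :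
    |psi δ κ x - psi δ κ y| ≤ κ / δ * (c / δ) ^ (κ - 1) * |x - y| := by
  have hx0 : 0 < x := lt_of_lt_of_le hc hx
  have hy0 : 0 < y := lt_of_lt_of_le hc hy
  have h1 : psi δ κ x = min 1 ((x / δ) ^ κ) := by
    rw [psi_eq_min hδ hκ0, max_eq_left hx0.le]
  have h2 : psi δ κ y = min 1 ((y / δ) ^ κ) := by
    rw [psi_eq_min hδ hκ0, max_eq_left hy0.le]
  rw [h1, h2]
  calc |min 1 ((x / δ) ^ κ) - min 1 ((y / δ) ^ κ)|
      ≤ |(x / δ) ^ κ - (y / δ) ^ κ| := abs_min_sub_min _ _ _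
    _ ≤ κ / δ * (c / δ) ^ (κ - 1) * |x - y| := by
        have := Convex.norm_image_sub_le_of_norm_hasDerivWithin_le
          (f := fun z : ℝ => (z / δ) ^ κ)
          (f' := fun z : ℝ => κ / δ * (z / δ) ^ (κ - 1))
          (s := Ici c) (C := κ / δ * (c / δ) ^ (κ - 1))
          (fun z hz => (hasDerivAt_rpow_div hδ (lt_of_lt_of_le hc hz)).hasDerivWithinAt)
          (fun z hz => by
            have hz0 : 0 < z := lt_of_lt_of_le hc hz
            rw [Real.norm_eq_abs, abs_of_nonneg (mul_nonneg (div_nonneg hκ0.le hδ.le)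
              (Real.rpow_nonneg (div_nonneg hz0.le hδ.le) _))]
            exact mul_le_mul_of_nonneg_left
              (rpow_anti (div_pos hc hδ) (by gcongr; exact hz) (by linarith))
              (div_nonneg hκ0.le hδ.le))
          (convex_Ici c) hy hx
        simpa [Real.norm_eq_abs] using this
end psider

noncomputable def fKL (a b : ℝ) : ℝ := (a / b - 1 - Real.log (a / b)) * b

lemma fKL_eq {a b : ℝ} (ha : 0 < a) (hb : 0 < b) :
    fKL a b = a - b - b * Real.log a + b * Real.log b := by
  unfold fKL
  rw [Real.log_div ha.ne' hb.ne']
  field_simp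
  ring

lemma fKL_self {b : ℝ} (hb : 0 < b) : fKL b b = 0 := by
  unfold fKL
  rw [div_self hb.ne', Real.log_one]
  ring

lemma continuous_fKL {A B : ℝ → ℝ} (hA : Continuous A) (hB : Continuous B)
    (hA0 : ∀ y, 0 < A y) (hB0 : ∀ y, 0 < B y) :
    Continuous fun y => fKL (A y) (B y) := by
  unfold fKL
  have hdiv : Continuous fun y => A y / B y := hA.div hB fun y => (hB0 y).ne'
  exact (((hdiv.sub continuous_const).sub
    (hdiv.log fun y => (div_pos (hA0 y) (hB0 y)).ne')).mul hB)

lemma hasDerivWithinAt_fKL {A B : ℝ → ℝ} {A' B' x : ℝ} {s : Set ℝ}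
    (hA : HasDerivWithinAt A A' s x) (hB : HasDerivWithinAt B B' s x)
    (hAx : 0 < A x) (hBx : 0 < B x) :
    HasDerivWithinAt (fun y => fKL (A y) (B y))
      (A' * (1 - B x / A x) + B' * Real.log (B x / A x)) s x := by
  have hAe : ∀ᶠ y in nhdsWithin x s, 0 < A y :=
    hA.continuousWithinAt.eventually (eventually_gt_nhds hAx)
  have hBe : ∀ᶠ y in nhdsWithin x s, 0 < B y :=
    hB.continuousWithinAt.eventually (eventually_gt_nhds hBx)
  have hd : HasDerivWithinAt
      (fun y => A y - B y - B y * Real.log (A y) + B y * Real.log (B y))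
      ((A' - B') - (B' * Real.log (A x) + B x * (A' / A x))
        + (B' * Real.log (B x) + B x * (B' / B x))) s x :=
    ((hA.sub hB).sub (hB.mul (hA.log hAx.ne'))).add (hB.mul (hB.log hBx.ne'))
  have heq : (fun y => fKL (A y) (B y))
      =ᶠ[nhdsWithin x s] fun y => A y - B y - B y * Real.log (A y) + B y * Real.log (B y) := by
    filter_upwards [hAe, hBe] with y h1 h2
    exact fKL_eq h1 h2
  have hx0 : fKL (A x) (B x) = A x - B x - B x * Real.log (A x) + B x * Real.log (B x) :=
    fKL_eq hAx hBx
  have := hd.congr_of_eventuallyEq heq hx0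
  refine this.congr_deriv ?_
  rw [Real.log_div hBx.ne' hAx.ne']
  field_simp
  ring

lemma hasDerivAt_fKL {A B : ℝ → ℝ} {A' B' x : ℝ}
    (hA : HasDerivAt A A' x) (hB : HasDerivAt B B' x)
    (hAx : 0 < A x) (hBx : 0 < B x) :
    HasDerivAt (fun y => fKL (A y) (B y))
      (A' * (1 - B x / A x) + B' * Real.log (B x / A x)) x := by
  rw [← hasDerivWithinAt_univ] at *
  exact hasDerivWithinAt_fKL hA hB hAx hBx

lemma abs_log_div_le {lam0 A B : ℝ} (h0 : 0 < lam0) (hA : lam0 ≤ A) (hB : lam0 ≤ B) :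
    |Real.log (B / A)| ≤ |B - A| / lam0 := by
  have hA0 : 0 < A := lt_of_lt_of_le h0 hA
  have hB0 : 0 < B := lt_of_lt_of_le h0 hB
  have key : ∀ u v : ℝ, lam0 ≤ u → lam0 ≤ v → u ≤ v → Real.log (v / u) ≤ (v - u) / lam0 := by
    intro u v hu hv huv
    have hu0 : 0 < u := lt_of_lt_of_le h0 hu
    calc Real.log (v / u) ≤ v / u - 1 :=
          Real.log_le_sub_one_of_pos (div_pos (lt_of_lt_of_le h0 hv) hu0)
      _ = (v - u) / u := by field_simp
      _ ≤ (v - u) / lam0 := by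
          apply div_le_div_of_nonneg_left (by linarith) h0 hu
  rcases le_total A B with hAB | hBA
  · rw [abs_of_nonneg (Real.log_nonneg ((one_le_div hA0).2 hAB)),
      abs_of_nonneg (by linarith : (0:ℝ) ≤ B - A)]
    exact key A B hA hB hAB
  · have h1 : Real.log (B / A) = - Real.log (A / B) := by
      rw [← Real.log_inv, inv_div]
    rw [h1, abs_neg, abs_of_nonneg (Real.log_nonneg ((one_le_div hB0).2 hBA)),
      abs_of_nonpos (by linarith : B - A ≤ 0), neg_sub]
    exact key B A hB hA hBA

lemma fKL_sub_fKL_le {a b₁ b₂ M : ℝ} (ha : 0 < a) (hb₁ : 0 < b₁) (hb₂ : 0 < b₂)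
    (hM : ∀ b ∈ Set.uIcc b₁ b₂, |Real.log (b / a)| ≤ M) :
    |fKL a b₁ - fKL a b₂| ≤ M * |b₁ - b₂| := by
  have hsub : Set.uIcc b₁ b₂ ⊆ Set.Ioi 0 := by
    intro b hb
    have := Set.uIcc_subset_uIcc_iff_le.mp (le_refl (Set.uIcc b₁ b₂))
    rcases Set.mem_uIcc.1 hb with ⟨h1, _⟩ | ⟨h1, _⟩
    · exact lt_of_lt_of_le hb₁ h1
    · exact lt_of_lt_of_le hb₂ h1
  have hder : ∀ b ∈ Set.uIcc b₁ b₂, HasDerivWithinAt (fun b => fKL a b)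
      (Real.log (b / a)) (Set.uIcc b₁ b₂) b := by
    intro b hb
    have hb0 : 0 < b := hsub hb
    have := hasDerivWithinAt_fKL (hasDerivWithinAt_const b _ a)
      (hasDerivWithinAt_id b (Set.uIcc b₁ b₂)) ha hb0
    simpa using this
  have := Convex.norm_image_sub_le_of_norm_hasDerivWithin_le hder
    (fun b hb => by rw [Real.norm_eq_abs]; exact hM b hb)
    (convex_uIcc b₁ b₂) (Set.right_mem_uIcc) (Set.left_mem_uIcc)
  simpa [Real.norm_eq_abs] using this

noncomputable def gI (S h lam0 δ κ ϑ₀ ϑ s : ℝ) : ℝ :=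
  fKL (S * psi δ κ s + lam0) ((S + h) * psi δ κ (s + ϑ - ϑ₀) + lam0)

noncomputable def qI (S h lam0 δ κ ϑ₀ ϑ s : ℝ) : ℝ :=
  (S + h) * psid δ κ (s + ϑ - ϑ₀) *
    Real.log (((S + h) * psi δ κ (s + ϑ - ϑ₀) + lam0) / (S * psi δ κ s + lam0))

noncomputable def pI (S h lam0 δ κ ϑ₀ ϑ s : ℝ) : ℝ :=
  S * psid δ κ s *
    (1 - ((S + h) * psi δ κ (s + ϑ - ϑ₀) + lam0) / (S * psi δ κ s + lam0))

section main
set_option linter.unusedSectionVars false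
variable {S lam0 δ κ h ϑ₀ : ℝ} (hS : 0 < S) (hlam0 : 0 < lam0) (hδ : 0 < δ)
  (hκ0 : 0 < κ) (hκ1 : κ < 1) (hSh : 0 < S + h)

include hS hlam0 hδ hκ0 in
lemma A_pos (s : ℝ) : 0 < S * psi δ κ s + lam0 :=
  add_pos_of_nonneg_of_pos (mul_nonneg hS.le (psi_nonneg hδ)) hlam0

include hS hlam0 hδ hκ0 in
lemma A_ge (s : ℝ) : lam0 ≤ S * psi δ κ s + lam0 :=
  le_add_of_nonneg_left (mul_nonneg hS.le (psi_nonneg hδ))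

include hS hlam0 hδ hκ0 in
lemma A_le (s : ℝ) : S * psi δ κ s + lam0 ≤ S + lam0 := by
  nlinarith [psi_nonneg hδ (κ := κ) (x := s), psi_le_one hδ hκ0 (x := s)]

include hSh hlam0 hδ hκ0 in
lemma B_pos (s : ℝ) : 0 < (S + h) * psi δ κ s + lam0 :=
  add_pos_of_nonneg_of_pos (mul_nonneg hSh.le (psi_nonneg hδ)) hlam0

include hSh hlam0 hδ hκ0 in
lemma B_ge (s : ℝ) : lam0 ≤ (S + h) * psi δ κ s + lam0 :=
  le_add_of_nonneg_left (mul_nonneg hSh.le (psi_nonneg hδ))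

include hSh hlam0 hδ hκ0 in
lemma B_le (s : ℝ) : (S + h) * psi δ κ s + lam0 ≤ (S + h) + lam0 := by
  nlinarith [psi_nonneg hδ (κ := κ) (x := s), psi_le_one hδ hκ0 (x := s)]

include hS hlam0 hδ hκ0 hSh in
lemma cont_gI (ϑ : ℝ) : Continuous (fun s => gI S h lam0 δ κ ϑ₀ ϑ s) := by
  unfold gI
  apply continuous_fKL
  · exact (continuous_const.mul (continuous_psi hδ hκ0)).add continuous_const
  · exact (continuous_const.mul ((continuous_psi hδ hκ0).comp
      (by continuity))).add continuous_const
  · exact fun y => A_pos hS hlam0 hδ hκ0 y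
  · exact fun y => B_pos hlam0 hδ hκ0 hSh _

include hδ in
lemma meas_qI (ϑ : ℝ) : Measurable (fun s => qI S h lam0 δ κ ϑ₀ ϑ s) := by
  unfold qI
  have m1 : Measurable fun s : ℝ => s + ϑ - ϑ₀ := by measurability
  exact (measurable_const.mul ((measurable_psid (δ := δ) (κ := κ)).comp m1)).mul
    ((Real.measurable_log).comp
      (((measurable_const.mul ((measurable_psi (δ := δ) (κ := κ)).comp m1)).add
        measurable_const).div
        ((measurable_const.mul (measurable_psi (δ := δ) (κ := κ))).add measurable_const)))

include hδ in
lemma meas_pI (ϑ : ℝ) : Measurable (fun s => pI S h lam0 δ κ ϑ₀ ϑ s) := by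
  unfold pI
  have m1 : Measurable fun s : ℝ => s + ϑ - ϑ₀ := by measurability
  exact (measurable_const.mul (measurable_psid (δ := δ) (κ := κ))).mul
    (measurable_const.sub
      (((measurable_const.mul ((measurable_psi (δ := δ) (κ := κ)).comp m1)).add
        measurable_const).div
        ((measurable_const.mul (measurable_psi (δ := δ) (κ := κ))).add measurable_const)))

include hS hlam0 hδ hκ0 hκ1 hSh in
lemma bound_qI {ϑ s : ℝ} (hd : ϑ₀ ≤ ϑ) (hs : 0 < s) :
    |qI S h lam0 δ κ ϑ₀ ϑ s| ≤
      ((S + h) * (κ * δ ^ (-κ)) * ((2 * S + h) / lam0)) * s ^ (κ - 1) := by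
  unfold qI
  rw [abs_mul, abs_mul]
  have h1 : |psid δ κ (s + ϑ - ϑ₀)| ≤ κ * δ ^ (-κ) * s ^ (κ - 1) := by
    rw [abs_of_nonneg (psid_nonneg hδ hκ0 _)]
    calc psid δ κ (s + ϑ - ϑ₀) ≤ κ * δ ^ (-κ) * (s + ϑ - ϑ₀) ^ (κ - 1) :=
          psid_le_rpow hδ hκ0 hκ1 (by linarith)
      _ ≤ κ * δ ^ (-κ) * s ^ (κ - 1) := by
          apply mul_le_mul_of_nonneg_left (rpow_anti hs (by linarith) (by linarith))
          exact mul_nonneg hκ0.le (Real.rpow_nonneg hδ.le _)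
  have h2 : |Real.log (((S + h) * psi δ κ (s + ϑ - ϑ₀) + lam0) /
      (S * psi δ κ s + lam0))| ≤ (2 * S + h) / lam0 := by
    apply le_trans (abs_log_div_le hlam0 (A_ge hS hlam0 hδ hκ0 s)
      (B_ge hlam0 hδ hκ0 hSh _))
    gcongr
    rw [abs_le]
    constructor <;>
      nlinarith [psi_nonneg hδ (κ := κ) (x := s), psi_le_one hδ hκ0 (x := s),
        psi_nonneg hδ (κ := κ) (x := s + ϑ - ϑ₀), psi_le_one hδ hκ0 (x := s + ϑ - ϑ₀)]
  calc |S + h| * |psid δ κ (s + ϑ - ϑ₀)| * |Real.log (((S + h) * psi δ κ (s + ϑ - ϑ₀) + lam0) /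
        (S * psi δ κ s + lam0))|
      ≤ (S + h) * (κ * δ ^ (-κ) * s ^ (κ - 1)) * ((2 * S + h) / lam0) := by
        apply mul_le_mul _ h2 (abs_nonneg _)
        · exact mul_nonneg hSh.le (mul_nonneg (mul_nonneg hκ0.le
            (Real.rpow_nonneg hδ.le _)) (Real.rpow_nonneg hs.le _))
        · rw [abs_of_pos hSh]
          exact mul_le_mul_of_nonneg_left h1 hSh.le
    _ = (S + h) * (κ * δ ^ (-κ)) * ((2 * S + h) / lam0) * s ^ (κ - 1) := by ring

include hS hlam0 hδ hκ0 hκ1 hSh in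
lemma bound_pI {ϑ : ℝ} {s : ℝ} (hs : 0 ≤ s) :
    |pI S h lam0 δ κ ϑ₀ ϑ s| ≤
      (S * (κ * δ ^ (-κ)) * (1 + (S + h + lam0) / lam0)) * s ^ (κ - 1) := by
  unfold pI
  rw [abs_mul, abs_mul]
  have h1 : |psid δ κ s| ≤ κ * δ ^ (-κ) * s ^ (κ - 1) := by
    rw [abs_of_nonneg (psid_nonneg hδ hκ0 _)]
    exact psid_le_rpow hδ hκ0 hκ1 hs
  have hBA : 0 < ((S + h) * psi δ κ (s + ϑ - ϑ₀) + lam0) / (S * psi δ κ s + lam0) :=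
    div_pos (B_pos hlam0 hδ hκ0 hSh _) (A_pos hS hlam0 hδ hκ0 _)
  have hBA2 : ((S + h) * psi δ κ (s + ϑ - ϑ₀) + lam0) / (S * psi δ κ s + lam0) ≤
      (S + h + lam0) / lam0 := by
    apply div_le_div₀ (by positivity) ?_ hlam0 (A_ge hS hlam0 hδ hκ0 _)
    linarith [B_le hlam0 hδ hκ0 hSh (s := s + ϑ - ϑ₀)]
  have h2 : |1 - ((S + h) * psi δ κ (s + ϑ - ϑ₀) + lam0) / (S * psi δ κ s + lam0)| ≤
      1 + (S + h + lam0) / lam0 := by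
    rw [abs_le]; constructor <;> nlinarith
  calc |S| * |psid δ κ s| * |1 - ((S + h) * psi δ κ (s + ϑ - ϑ₀) + lam0) /
        (S * psi δ κ s + lam0)|
      ≤ S * (κ * δ ^ (-κ) * s ^ (κ - 1)) * (1 + (S + h + lam0) / lam0) := by
        apply mul_le_mul _ h2 (abs_nonneg _)
        · exact mul_nonneg hS.le (mul_nonneg (mul_nonneg hκ0.le
            (Real.rpow_nonneg hδ.le _)) (Real.rpow_nonneg hs _))
        · rw [abs_of_pos hS]
          exact mul_le_mul_of_nonneg_left h1 hS.le
    _ = (S * (κ * δ ^ (-κ)) * (1 + (S + h + lam0) / lam0)) * s ^ (κ - 1) := by ring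

include hS hlam0 hδ hκ0 hκ1 hSh in
lemma intInt_qI {ϑ b : ℝ} (hd : ϑ₀ ≤ ϑ) (hb : 0 ≤ b) :
    IntervalIntegrable (fun s => qI S h lam0 δ κ ϑ₀ ϑ s) volume 0 b := by
  apply IntervalIntegrable.mono_fun'
    (g := fun s => ((S + h) * (κ * δ ^ (-κ)) * ((2 * S + h) / lam0)) * s ^ (κ - 1))
    ((intervalIntegral.intervalIntegrable_rpow' (by linarith)).const_mul _)
    ((meas_qI hδ ϑ).aestronglyMeasurable.restrict)
  apply (ae_restrict_iff' measurableSet_uIoc).2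
  apply Filter.Eventually.of_forall
  intro s hs
  rw [Set.uIoc_of_le hb] at hs
  simp only [Real.norm_eq_abs]
  exact bound_qI hS hlam0 hδ hκ0 hκ1 hSh hd hs.1

include hS hlam0 hδ hκ0 hκ1 hSh in
lemma intInt_pI {ϑ b : ℝ} (hb : 0 ≤ b) :
    IntervalIntegrable (fun s => pI S h lam0 δ κ ϑ₀ ϑ s) volume 0 b := by
  apply IntervalIntegrable.mono_fun'
    (g := fun s => (S * (κ * δ ^ (-κ)) * (1 + (S + h + lam0) / lam0)) * s ^ (κ - 1))
    ((intervalIntegral.intervalIntegrable_rpow' (by linarith)).const_mul _)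
    ((meas_pI hδ ϑ).aestronglyMeasurable.restrict)
  apply (ae_restrict_iff' measurableSet_uIoc).2
  apply Filter.Eventually.of_forall
  intro s hs
  rw [Set.uIoc_of_le hb] at hs
  simp only [Real.norm_eq_abs]
  exact bound_pI hS hlam0 hδ hκ0 hκ1 hSh hs.1.le

include hS hlam0 hδ hκ0 hκ1 hSh in
lemma hasDerivAt_P {a b ϑ : ℝ} (hab : a ≤ b) (hpos : 0 < a + ϑ - ϑ₀) :
    HasDerivAt (fun x => ∫ s in a..b, gI S h lam0 δ κ ϑ₀ x s)
      (∫ s in a..b, qI S h lam0 δ κ ϑ₀ ϑ s) ϑ := by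
  set ε := (a + ϑ - ϑ₀) / 2 with hεdef
  have hε : 0 < ε := by positivity
  set L : ℝ := (2 * S + h) / lam0 * ((S + h) * (κ / δ * (ε / δ) ^ (κ - 1))) with hLdef
  have hLψ : 0 ≤ κ / δ * (ε / δ) ^ (κ - 1) :=
    mul_nonneg (div_nonneg hκ0.le hδ.le) (Real.rpow_nonneg (by positivity) _)
  have hL : 0 ≤ L := by
    apply mul_nonneg (div_nonneg (by linarith) hlam0.le) (mul_nonneg hSh.le hLψ)
  refine (intervalIntegral.hasDerivAt_integral_of_dominated_loc_of_lip
    (F := fun x s => gI S h lam0 δ κ ϑ₀ x s)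
    (F' := fun s => qI S h lam0 δ κ ϑ₀ ϑ s) (x₀ := ϑ)
    (bound := fun _ => L) (Metric.ball_mem_nhds ϑ hε) ?_ ?_ ?_ ?_ ?_ ?_).2
  · exact Filter.Eventually.of_forall fun x =>
      ((cont_gI hS hlam0 hδ hκ0 hSh x).aestronglyMeasurable).restrict
  · exact (cont_gI hS hlam0 hδ hκ0 hSh ϑ).intervalIntegrable _ _
  · exact (meas_qI hδ ϑ).aestronglyMeasurable.restrict
  · apply Filter.Eventually.of_forall
    intro s hs
    rw [Set.uIoc_of_le hab] at hs
    rw [lipschitzOnWith_iff_dist_le_mul]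
    intro x₁ h₁ x₂ h₂
    rw [Metric.mem_ball, Real.dist_eq] at h₁ h₂
    rw [Real.dist_eq, Real.dist_eq]
    have hy₁ : ε ≤ s + x₁ - ϑ₀ := by
      have := abs_lt.1 h₁
      have hsa := hs.1
      simp only [hεdef] at *
      linarith [this.1]
    have hy₂ : ε ≤ s + x₂ - ϑ₀ := by
      have := abs_lt.1 h₂
      have hsa := hs.1
      simp only [hεdef] at *
      linarith [this.1]
    have key : |gI S h lam0 δ κ ϑ₀ x₁ s - gI S h lam0 δ κ ϑ₀ x₂ s| ≤
        (2 * S + h) / lam0 * |((S + h) * psi δ κ (s + x₁ - ϑ₀) + lam0) -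
          ((S + h) * psi δ κ (s + x₂ - ϑ₀) + lam0)| := by
      apply fKL_sub_fKL_le (A_pos hS hlam0 hδ hκ0 s)
        (B_pos hlam0 hδ hκ0 hSh _) (B_pos hlam0 hδ hκ0 hSh _)
      intro c hc
      have hc1 : lam0 ≤ c ∧ c ≤ S + h + lam0 := by
        rcases Set.mem_uIcc.1 hc with ⟨u1, u2⟩ | ⟨u1, u2⟩ <;>
          exact ⟨le_trans (B_ge hlam0 hδ hκ0 hSh _) u1,
            le_trans u2 (by linarith [(B_le hlam0 hδ hκ0 hSh (s := s + x₁ - ϑ₀)),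
              (B_le hlam0 hδ hκ0 hSh (s := s + x₂ - ϑ₀))])⟩
      apply le_trans (abs_log_div_le hlam0 (A_ge hS hlam0 hδ hκ0 s) hc1.1)
      gcongr
      rw [abs_le]
      constructor <;> nlinarith [A_ge hS hlam0 hδ hκ0 s, A_le hS hlam0 hδ hκ0 s]
    have key2 : |((S + h) * psi δ κ (s + x₁ - ϑ₀) + lam0) -
        ((S + h) * psi δ κ (s + x₂ - ϑ₀) + lam0)| ≤
        (S + h) * (κ / δ * (ε / δ) ^ (κ - 1) * |x₁ - x₂|) := by
      have : ((S + h) * psi δ κ (s + x₁ - ϑ₀) + lam0) -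
          ((S + h) * psi δ κ (s + x₂ - ϑ₀) + lam0) =
          (S + h) * (psi δ κ (s + x₁ - ϑ₀) - psi δ κ (s + x₂ - ϑ₀)) := by ring
      rw [this, abs_mul, abs_of_pos hSh]
      apply mul_le_mul_of_nonneg_left _ hSh.le
      have := psi_abs_sub_le hδ hκ0 hκ1 hε hy₁ hy₂
      calc |psi δ κ (s + x₁ - ϑ₀) - psi δ κ (s + x₂ - ϑ₀)|
          ≤ κ / δ * (ε / δ) ^ (κ - 1) * |s + x₁ - ϑ₀ - (s + x₂ - ϑ₀)| := this
        _ = κ / δ * (ε / δ) ^ (κ - 1) * |x₁ - x₂| := by ring_nf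
    calc |gI S h lam0 δ κ ϑ₀ x₁ s - gI S h lam0 δ κ ϑ₀ x₂ s|
        ≤ (2 * S + h) / lam0 * ((S + h) * (κ / δ * (ε / δ) ^ (κ - 1) * |x₁ - x₂|)) := by
          apply le_trans key
          apply mul_le_mul_of_nonneg_left key2 (div_nonneg (by linarith) hlam0.le)
      _ = L * |x₁ - x₂| := by rw [hLdef]; ring
      _ ≤ (Real.nnabs L : ℝ) * |x₁ - x₂| := by
          rw [Real.coe_nnabs, abs_of_nonneg hL]
  · exact intervalIntegrable_const
  · have hne : ∀ᵐ s : ℝ, s ≠ δ + ϑ₀ - ϑ := by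
      rw [ae_iff]
      simpa using measure_singleton (α := ℝ) (δ + ϑ₀ - ϑ)
    filter_upwards [hne] with s hsne hs
    rw [Set.uIoc_of_le hab] at hs
    have hy0 : 0 < s + ϑ - ϑ₀ := by linarith [hs.1]
    have hyne : s + ϑ - ϑ₀ ≠ δ := fun hc => hsne (by linarith)
    have haff : HasDerivAt (fun x : ℝ => s + x - ϑ₀) 1 ϑ := by
      simpa using ((hasDerivAt_id ϑ).const_add s).sub_const ϑ₀
    have hψ : HasDerivAt (fun x => psi δ κ (s + x - ϑ₀)) (psid δ κ (s + ϑ - ϑ₀)) ϑ := by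
      have := (hasDerivAt_psi hδ hκ0 hy0 hyne).comp ϑ haff
      simpa [Function.comp_def] using this
    have hB : HasDerivAt (fun x => (S + h) * psi δ κ (s + x - ϑ₀) + lam0)
        ((S + h) * psid δ κ (s + ϑ - ϑ₀)) ϑ := (hψ.const_mul (S + h)).add_const lam0
    have := hasDerivAt_fKL (hasDerivAt_const ϑ (S * psi δ κ s + lam0)) hB
      (A_pos hS hlam0 hδ hκ0 s) (B_pos hlam0 hδ hκ0 hSh _)
    unfold gI qI
    simpa using this

include hδ hκ0 in
lemma psi_shift_integral {ρ η : ℝ} (hρ : 0 ≤ ρ) (hηρ : |η| ≤ ρ) :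
    ∫ s in (0:ℝ)..ρ, |psi δ κ (s + η) - psi δ κ s| ≤ 2 * |η| := by
  have hc : Continuous (psi δ κ) := continuous_psi hδ hκ0
  have hcs : Continuous fun s => psi δ κ (s + η) := hc.comp (by continuity)
  have hint : ∀ u v : ℝ, IntervalIntegrable (psi δ κ) volume u v :=
    fun u v => hc.intervalIntegrable u v
  have hshift : ∫ s in (0:ℝ)..ρ, psi δ κ (s + η) = ∫ s in η..(ρ + η), psi δ κ s := by
    simpa using intervalIntegral.integral_comp_add_right (a := (0:ℝ)) (b := ρ)
      (fun s => psi δ κ s) η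
  rcases le_or_gt 0 η with hη | hη
  · have habs : ∀ s, |psi δ κ (s + η) - psi δ κ s| = psi δ κ (s + η) - psi δ κ s := by
      intro s
      exact abs_of_nonneg (sub_nonneg.2 (monotone_psi hδ hκ0 (by linarith)))
    rw [intervalIntegral.integral_congr (fun s _ => habs s)]
    rw [intervalIntegral.integral_sub (hcs.intervalIntegrable _ _) (hint _ _), hshift]
    have e1 : ∫ s in η..(ρ + η), psi δ κ s =
        (∫ s in η..ρ, psi δ κ s) + ∫ s in ρ..(ρ + η), psi δ κ s :=
      (intervalIntegral.integral_add_adjacent_intervals (hint _ _) (hint _ _)).symm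
    have e2 : ∫ s in (0:ℝ)..ρ, psi δ κ s =
        (∫ s in (0:ℝ)..η, psi δ κ s) + ∫ s in η..ρ, psi δ κ s :=
      (intervalIntegral.integral_add_adjacent_intervals (hint _ _) (hint _ _)).symm
    have b1 : ∫ s in ρ..(ρ + η), psi δ κ s ≤ η := by
      calc ∫ s in ρ..(ρ + η), psi δ κ s ≤ ∫ _ in ρ..(ρ + η), (1:ℝ) :=
            intervalIntegral.integral_mono_on (by linarith) (hint _ _)
              intervalIntegrable_const (fun x _ => psi_le_one hδ hκ0)
        _ = η := by simp
    have b2 : 0 ≤ ∫ s in (0:ℝ)..η, psi δ κ s :=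
      intervalIntegral.integral_nonneg hη (fun x _ => psi_nonneg hδ)
    rw [e1, e2]
    rw [abs_of_nonneg hη]
    linarith
  · have habs : ∀ s, |psi δ κ (s + η) - psi δ κ s| = psi δ κ s - psi δ κ (s + η) := by
      intro s
      rw [abs_sub_comm]
      exact abs_of_nonneg (sub_nonneg.2 (monotone_psi hδ hκ0 (by linarith)))
    rw [intervalIntegral.integral_congr (fun s _ => habs s)]
    rw [intervalIntegral.integral_sub (hint _ _) (hcs.intervalIntegrable _ _), hshift]
    have hρη : 0 ≤ ρ + η := by
      have := abs_le.1 hηρ; linarith [this.1]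
    have e1 : ∫ s in η..(ρ + η), psi δ κ s =
        (∫ s in η..(0:ℝ), psi δ κ s) + ∫ s in (0:ℝ)..(ρ + η), psi δ κ s :=
      (intervalIntegral.integral_add_adjacent_intervals (hint _ _) (hint _ _)).symm
    have e2 : ∫ s in (0:ℝ)..ρ, psi δ κ s =
        (∫ s in (0:ℝ)..(ρ + η), psi δ κ s) + ∫ s in (ρ + η)..ρ, psi δ κ s :=
      (intervalIntegral.integral_add_adjacent_intervals (hint _ _) (hint _ _)).symm
    have b1 : ∫ s in (ρ + η)..ρ, psi δ κ s ≤ -η := by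
      calc ∫ s in (ρ + η)..ρ, psi δ κ s ≤ ∫ _ in (ρ + η)..ρ, (1:ℝ) :=
            intervalIntegral.integral_mono_on (by linarith) (hint _ _)
              intervalIntegrable_const (fun x _ => psi_le_one hδ hκ0)
        _ = -η := by simp
    have b2 : 0 ≤ ∫ s in η..(0:ℝ), psi δ κ s :=
      intervalIntegral.integral_nonneg hη.le (fun x _ => psi_nonneg hδ)
    rw [e1, e2]
    rw [abs_of_neg hη]
    linarith

include hS hlam0 hδ hκ0 hκ1 hSh in
lemma gdiff_bound {s η ρ : ℝ} (hs0 : 0 ≤ s) (hsρ : s ≤ ρ) (hη : |η| ≤ ρ) :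
    |fKL (S * psi δ κ s + lam0) ((S + h) * psi δ κ (s + η) + lam0) -
      fKL (S * psi δ κ s + lam0) ((S + h) * psi δ κ s + lam0)| ≤
      (4 * (2 * S + h) * (ρ / δ) ^ κ / lam0) * ((S + h) * |psi δ κ (s + η) - psi δ κ s|) := by
  set P := (ρ / δ) ^ κ with hPdef
  have hP : 0 ≤ P := Real.rpow_nonneg (div_nonneg (le_trans hs0 hsρ) hδ.le) _
  have hψs : psi δ κ s ≤ P := by
    calc psi δ κ s ≤ (s / δ) ^ κ := psi_le_rpow hδ hκ0 hs0
      _ ≤ P := Real.rpow_le_rpow (div_nonneg hs0 hδ.le) (by gcongr) hκ0.le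
  have hψsη : psi δ κ (s + η) ≤ 2 * P := by
    have h1 : psi δ κ (s + η) ≤ psi δ κ (s + |η|) :=
      monotone_psi hδ hκ0 (by linarith [le_abs_self η])
    have h2 : psi δ κ (s + |η|) ≤ ((s + |η|) / δ) ^ κ :=
      psi_le_rpow hδ hκ0 (by positivity)
    have h3 : ((s + |η|) / δ) ^ κ ≤ (s / δ) ^ κ + (|η| / δ) ^ κ := by
      rw [add_div]
      exact rpow_add_le (div_nonneg hs0 hδ.le) (by positivity) hκ0.le hκ1.le
    have h4 : (s / δ) ^ κ ≤ P :=
      Real.rpow_le_rpow (div_nonneg hs0 hδ.le) (by gcongr) hκ0.le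
    have h5 : (|η| / δ) ^ κ ≤ P := Real.rpow_le_rpow (by positivity) (by gcongr) hκ0.le
    linarith
  have hbd := fKL_sub_fKL_le (a := S * psi δ κ s + lam0)
    (b₁ := (S + h) * psi δ κ (s + η) + lam0) (b₂ := (S + h) * psi δ κ s + lam0)
    (M := 4 * (2 * S + h) * P / lam0)
    (A_pos hS hlam0 hδ hκ0 s) (B_pos hlam0 hδ hκ0 hSh _) (B_pos hlam0 hδ hκ0 hSh _)
    (by
      intro c hc
      have hψs0 : 0 ≤ psi δ κ s := psi_nonneg hδ
      have hψsη0 : 0 ≤ psi δ κ (s + η) := psi_nonneg hδ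
      have hc1 : lam0 ≤ c := by
        rcases Set.mem_uIcc.1 hc with ⟨u1, -⟩ | ⟨u1, -⟩ <;> nlinarith
      have hc2 : c ≤ (S + h) * (2 * P) + lam0 := by
        rcases Set.mem_uIcc.1 hc with ⟨-, u2⟩ | ⟨-, u2⟩ <;> nlinarith
      apply le_trans (abs_log_div_le hlam0 (A_ge hS hlam0 hδ hκ0 s) hc1)
      rw [div_le_div_iff₀ hlam0 hlam0]
      have : |c - (S * psi δ κ s + lam0)| ≤ 4 * (2 * S + h) * P := by
        rw [abs_le]
        constructor <;> nlinarith
      nlinarith)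
  apply le_trans hbd
  apply le_of_eq
  have : (S + h) * psi δ κ (s + η) + lam0 - ((S + h) * psi δ κ s + lam0) =
      (S + h) * (psi δ κ (s + η) - psi δ κ s) := by ring
  rw [this, abs_mul, abs_of_pos hSh]

include hS hlam0 hδ hκ0 hκ1 hSh in
lemma hasDerivAt_P0 {b : ℝ} (hb : 0 < b) :
    HasDerivAt (fun x => ∫ s in (0:ℝ)..b, gI S h lam0 δ κ ϑ₀ x s)
      (∫ s in (0:ℝ)..b, qI S h lam0 δ κ ϑ₀ ϑ₀ s) ϑ₀ := by
  set Cq : ℝ := (S + h) * (κ * δ ^ (-κ)) * ((2 * S + h) / lam0) with hCqdef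
  have hCq : 0 ≤ Cq := by
    apply mul_nonneg (mul_nonneg hSh.le (mul_nonneg hκ0.le (Real.rpow_nonneg hδ.le _)))
    exact div_nonneg (by linarith) hlam0.le
  set E : ℝ → ℝ := fun ρ =>
    (4 * (2 * S + h) * (ρ / δ) ^ κ / lam0) * (S + h) * 2 + Cq * ρ ^ κ / κ with hEdef
  have hEcont : ContinuousAt E 0 := by
    apply ContinuousAt.add
    · apply ContinuousAt.mul (ContinuousAt.mul (ContinuousAt.div ?_ continuousAt_const
        hlam0.ne') continuousAt_const) continuousAt_const
      apply ContinuousAt.mul continuousAt_const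
      exact (Real.continuousAt_rpow_const _ _ (Or.inr hκ0.le)).comp
        ((continuousAt_id).div continuousAt_const hδ.ne')
    · apply ContinuousAt.div ?_ continuousAt_const hκ0.ne'
      exact continuousAt_const.mul (Real.continuousAt_rpow_const _ _ (Or.inr hκ0.le))
  have hE0 : E 0 = 0 := by
    simp [hEdef, Real.zero_rpow hκ0.ne', zero_div]
  rw [hasDerivAt_iff_tendsto_slope]
  rw [Metric.tendsto_nhds]
  intro ε hε
  -- choose ρ
  have hEev : ∀ᶠ ρ in nhds (0:ℝ), |E ρ| < ε / 2 := by
    have := hEcont.tendsto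
    rw [hE0] at this
    have := Metric.tendsto_nhds.1 this (ε / 2) (by linarith)
    simpa [Real.dist_eq] using this
  have hEev' : ∀ᶠ ρ in nhdsWithin (0:ℝ) (Set.Ioi 0), |E ρ| < ε / 2 ∧ ρ < b :=
    (hEev.filter_mono nhdsWithin_le_nhds).and
      (eventually_nhdsWithin_of_eventually_nhds
        (Metric.eventually_nhds_iff.2 ⟨b, hb, fun {x} hx => by
          rw [Real.dist_eq] at hx
          cases abs_lt.1 hx; linarith⟩))
  obtain ⟨ρ, hρmem, hρE, hρb⟩ : ∃ ρ : ℝ, ρ ∈ Set.Ioi (0:ℝ) ∧ |E ρ| < ε / 2 ∧ ρ < b := by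
    obtain ⟨ρ, h1, h2⟩ := (hEev'.and eventually_mem_nhdsWithin).exists
    exact ⟨ρ, h2, h1.1, h1.2⟩
  have hρ0 : 0 < ρ := hρmem
  -- derivative of the tail piece
  have hPρ : HasDerivAt (fun x => ∫ s in ρ..b, gI S h lam0 δ κ ϑ₀ x s)
      (∫ s in ρ..b, qI S h lam0 δ κ ϑ₀ ϑ₀ s) ϑ₀ :=
    hasDerivAt_P hS hlam0 hδ hκ0 hκ1 hSh hρb.le (by linarith)
  have hslope := Metric.tendsto_nhds.1 (hasDerivAt_iff_tendsto_slope.1 hPρ)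
    (ε / 4) (by linarith)
  have hball : ∀ᶠ x in nhdsWithin ϑ₀ {ϑ₀}ᶜ, |x - ϑ₀| < ρ :=
    eventually_nhdsWithin_of_eventually_nhds
      (Metric.eventually_nhds_iff.2 ⟨ρ, hρ0, fun {x} hx => by
        rwa [Real.dist_eq] at hx⟩)
  filter_upwards [hslope, hball, eventually_mem_nhdsWithin] with x hx1 hx2 hx3
  have hηne : x - ϑ₀ ≠ 0 := sub_ne_zero.2 hx3
  have hηabs : 0 < |x - ϑ₀| := abs_pos.2 hηne
  -- integrability facts
  have hgx : ∀ u v : ℝ, IntervalIntegrable (fun s => gI S h lam0 δ κ ϑ₀ x s) volume u v :=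
    fun u v => (cont_gI hS hlam0 hδ hκ0 hSh x).intervalIntegrable u v
  have hg0 : ∀ u v : ℝ, IntervalIntegrable (fun s => gI S h lam0 δ κ ϑ₀ ϑ₀ s) volume u v :=
    fun u v => (cont_gI hS hlam0 hδ hκ0 hSh ϑ₀).intervalIntegrable u v
  have hq0b : IntervalIntegrable (fun s => qI S h lam0 δ κ ϑ₀ ϑ₀ s) volume 0 b :=
    intInt_qI hS hlam0 hδ hκ0 hκ1 hSh le_rfl hb.le
  have hq0ρ : IntervalIntegrable (fun s => qI S h lam0 δ κ ϑ₀ ϑ₀ s) volume 0 ρ :=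
    hq0b.mono_set (by
      rw [Set.uIcc_of_le hρ0.le, Set.uIcc_of_le hb.le]
      exact Set.Icc_subset_Icc le_rfl hρb.le)
  have hq0ρb : IntervalIntegrable (fun s => qI S h lam0 δ κ ϑ₀ ϑ₀ s) volume ρ b :=
    hq0b.mono_set (by
      rw [Set.uIcc_of_le (le_of_lt hρb), Set.uIcc_of_le hb.le]
      exact Set.Icc_subset_Icc hρ0.le le_rfl)
  -- splitting
  have hsplitD : ∫ s in (0:ℝ)..b, qI S h lam0 δ κ ϑ₀ ϑ₀ s =
      (∫ s in (0:ℝ)..ρ, qI S h lam0 δ κ ϑ₀ ϑ₀ s) +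
        ∫ s in ρ..b, qI S h lam0 δ κ ϑ₀ ϑ₀ s :=
    (intervalIntegral.integral_add_adjacent_intervals hq0ρ hq0ρb).symm
  have hsplitPx : ∫ s in (0:ℝ)..b, gI S h lam0 δ κ ϑ₀ x s =
      (∫ s in (0:ℝ)..ρ, gI S h lam0 δ κ ϑ₀ x s) +
        ∫ s in ρ..b, gI S h lam0 δ κ ϑ₀ x s :=
    (intervalIntegral.integral_add_adjacent_intervals (hgx _ _) (hgx _ _)).symm
  have hsplitP0 : ∫ s in (0:ℝ)..b, gI S h lam0 δ κ ϑ₀ ϑ₀ s =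
      (∫ s in (0:ℝ)..ρ, gI S h lam0 δ κ ϑ₀ ϑ₀ s) +
        ∫ s in ρ..b, gI S h lam0 δ κ ϑ₀ ϑ₀ s :=
    (intervalIntegral.integral_add_adjacent_intervals (hg0 _ _) (hg0 _ _)).symm
  -- head difference bound
  have hhead : |(∫ s in (0:ℝ)..ρ, gI S h lam0 δ κ ϑ₀ x s) -
      ∫ s in (0:ℝ)..ρ, gI S h lam0 δ κ ϑ₀ ϑ₀ s| ≤
      (4 * (2 * S + h) * (ρ / δ) ^ κ / lam0) * (S + h) * (2 * |x - ϑ₀|) := by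
    rw [← intervalIntegral.integral_sub (hgx _ _) (hg0 _ _)]
    apply le_trans (intervalIntegral.abs_integral_le_integral_abs hρ0.le)
    have hmono : ∫ s in (0:ℝ)..ρ,
        |gI S h lam0 δ κ ϑ₀ x s - gI S h lam0 δ κ ϑ₀ ϑ₀ s| ≤
        ∫ s in (0:ℝ)..ρ, (4 * (2 * S + h) * (ρ / δ) ^ κ / lam0) * (S + h) *
          |psi δ κ (s + (x - ϑ₀)) - psi δ κ s| := by
      apply intervalIntegral.integral_mono_on hρ0.le
      · exact (((cont_gI hS hlam0 hδ hκ0 hSh x).sub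
          (cont_gI hS hlam0 hδ hκ0 hSh ϑ₀)).abs).intervalIntegrable _ _
      · apply Continuous.intervalIntegrable
        apply continuous_const.mul
        exact (((continuous_psi hδ hκ0).comp (by continuity)).sub
          (continuous_psi hδ hκ0)).abs
      · intro s hs
        have := gdiff_bound hS hlam0 hδ hκ0 hκ1 hSh (η := x - ϑ₀) (ρ := ρ)
          hs.1 hs.2 hx2.le
        unfold gI
        rw [show s + x - ϑ₀ = s + (x - ϑ₀) by ring, show s + ϑ₀ - ϑ₀ = s by ring]
        calc |fKL (S * psi δ κ s + lam0) ((S + h) * psi δ κ (s + (x - ϑ₀)) + lam0) -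
              fKL (S * psi δ κ s + lam0) ((S + h) * psi δ κ s + lam0)|
            ≤ (4 * (2 * S + h) * (ρ / δ) ^ κ / lam0) *
              ((S + h) * |psi δ κ (s + (x - ϑ₀)) - psi δ κ s|) := this
          _ = (4 * (2 * S + h) * (ρ / δ) ^ κ / lam0) * (S + h) *
              |psi δ κ (s + (x - ϑ₀)) - psi δ κ s| := by ring
    apply le_trans hmono
    rw [intervalIntegral.integral_const_mul]
    have hcoef : 0 ≤ (4 * (2 * S + h) * (ρ / δ) ^ κ / lam0) * (S + h) := by
      apply mul_nonneg _ hSh.le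
      apply div_nonneg _ hlam0.le
      exact mul_nonneg (by linarith) (Real.rpow_nonneg (by positivity) _)
    exact mul_le_mul_of_nonneg_left
      (psi_shift_integral hδ hκ0 hρ0.le hx2.le) hcoef
  -- q head bound
  have hqhead : |∫ s in (0:ℝ)..ρ, qI S h lam0 δ κ ϑ₀ ϑ₀ s| ≤ Cq * ρ ^ κ / κ := by
    apply le_trans (intervalIntegral.abs_integral_le_integral_abs hρ0.le)
    have : ∫ s in (0:ℝ)..ρ, |qI S h lam0 δ κ ϑ₀ ϑ₀ s| ≤
        ∫ s in (0:ℝ)..ρ, Cq * s ^ (κ - 1) := by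
      apply intervalIntegral.integral_mono_on hρ0.le hq0ρ.abs
        ((intervalIntegral.intervalIntegrable_rpow' (by linarith)).const_mul _)
      intro s hs
      rcases eq_or_lt_of_le hs.1 with heq | hlt
      · rw [← heq]
        unfold qI
        rw [show (0:ℝ) + ϑ₀ - ϑ₀ = 0 by ring]
        have hps : psid δ κ 0 = 0 := by
          unfold psid; rw [if_neg (by rintro ⟨w, -⟩; exact lt_irrefl _ w)]
        rw [hps]
        simp [Real.zero_rpow (by linarith : κ - 1 ≠ 0)]
      · exact bound_qI hS hlam0 hδ hκ0 hκ1 hSh le_rfl hlt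
    apply le_trans this
    rw [intervalIntegral.integral_const_mul, integral_rpow (Or.inl (by linarith))]
    rw [Real.zero_rpow (by linarith : κ - 1 + 1 ≠ 0)]
    rw [show κ - 1 + 1 = κ by ring]
    apply le_of_eq; ring
  -- final assembly
  rw [Real.dist_eq, slope_def_field, hsplitPx, hsplitP0, hsplitD]
  have hslopeρ : |((∫ s in ρ..b, gI S h lam0 δ κ ϑ₀ x s) -
      ∫ s in ρ..b, gI S h lam0 δ κ ϑ₀ ϑ₀ s) / (x - ϑ₀) -
      ∫ s in ρ..b, qI S h lam0 δ κ ϑ₀ ϑ₀ s| < ε / 4 := by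
    rw [Real.dist_eq, slope_def_field] at hx1
    exact hx1
  have hEρ : (4 * (2 * S + h) * (ρ / δ) ^ κ / lam0) * (S + h) * 2 + Cq * ρ ^ κ / κ
      < ε / 2 := by
    have := hρE
    rw [abs_lt] at this
    simpa [hEdef] using this.2
  have hheadq : |((∫ s in (0:ℝ)..ρ, gI S h lam0 δ κ ϑ₀ x s) -
      ∫ s in (0:ℝ)..ρ, gI S h lam0 δ κ ϑ₀ ϑ₀ s) / (x - ϑ₀)| ≤
      (4 * (2 * S + h) * (ρ / δ) ^ κ / lam0) * (S + h) * 2 := by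
    rw [abs_div]
    rw [div_le_iff₀ hηabs]
    calc |(∫ s in (0:ℝ)..ρ, gI S h lam0 δ κ ϑ₀ x s) -
        ∫ s in (0:ℝ)..ρ, gI S h lam0 δ κ ϑ₀ ϑ₀ s|
        ≤ (4 * (2 * S + h) * (ρ / δ) ^ κ / lam0) * (S + h) * (2 * |x - ϑ₀|) := hhead
      _ = (4 * (2 * S + h) * (ρ / δ) ^ κ / lam0) * (S + h) * 2 * |x - ϑ₀| := by ring
  calc |((∫ s in (0:ℝ)..ρ, gI S h lam0 δ κ ϑ₀ x s) +
        (∫ s in ρ..b, gI S h lam0 δ κ ϑ₀ x s) -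
        ((∫ s in (0:ℝ)..ρ, gI S h lam0 δ κ ϑ₀ ϑ₀ s) +
          ∫ s in ρ..b, gI S h lam0 δ κ ϑ₀ ϑ₀ s)) / (x - ϑ₀) -
        ((∫ s in (0:ℝ)..ρ, qI S h lam0 δ κ ϑ₀ ϑ₀ s) +
          ∫ s in ρ..b, qI S h lam0 δ κ ϑ₀ ϑ₀ s)|
      = |(((∫ s in (0:ℝ)..ρ, gI S h lam0 δ κ ϑ₀ x s) -
          ∫ s in (0:ℝ)..ρ, gI S h lam0 δ κ ϑ₀ ϑ₀ s) / (x - ϑ₀) -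
          (∫ s in (0:ℝ)..ρ, qI S h lam0 δ κ ϑ₀ ϑ₀ s)) +
          ((((∫ s in ρ..b, gI S h lam0 δ κ ϑ₀ x s) -
          ∫ s in ρ..b, gI S h lam0 δ κ ϑ₀ ϑ₀ s) / (x - ϑ₀)) -
          ∫ s in ρ..b, qI S h lam0 δ κ ϑ₀ ϑ₀ s)| := by
        congr 1
        field_simp
        ring
    _ ≤ |((∫ s in (0:ℝ)..ρ, gI S h lam0 δ κ ϑ₀ x s) -
          ∫ s in (0:ℝ)..ρ, gI S h lam0 δ κ ϑ₀ ϑ₀ s) / (x - ϑ₀) -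
          (∫ s in (0:ℝ)..ρ, qI S h lam0 δ κ ϑ₀ ϑ₀ s)| +
          |(((∫ s in ρ..b, gI S h lam0 δ κ ϑ₀ x s) -
          ∫ s in ρ..b, gI S h lam0 δ κ ϑ₀ ϑ₀ s) / (x - ϑ₀)) -
          ∫ s in ρ..b, qI S h lam0 δ κ ϑ₀ ϑ₀ s| := abs_add_le _ _
    _ ≤ (|((∫ s in (0:ℝ)..ρ, gI S h lam0 δ κ ϑ₀ x s) -
          ∫ s in (0:ℝ)..ρ, gI S h lam0 δ κ ϑ₀ ϑ₀ s) / (x - ϑ₀)| +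
          |∫ s in (0:ℝ)..ρ, qI S h lam0 δ κ ϑ₀ ϑ₀ s|) +
          |(((∫ s in ρ..b, gI S h lam0 δ κ ϑ₀ x s) -
          ∫ s in ρ..b, gI S h lam0 δ κ ϑ₀ ϑ₀ s) / (x - ϑ₀)) -
          ∫ s in ρ..b, qI S h lam0 δ κ ϑ₀ ϑ₀ s| := by
        gcongr
        exact abs_sub _ _
    _ < ((4 * (2 * S + h) * (ρ / δ) ^ κ / lam0) * (S + h) * 2 + Cq * ρ ^ κ / κ)
          + ε / 4 := by
        have := add_le_add hheadq hqhead
        linarith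
    _ < ε := by linarith

include hS hlam0 hδ hκ0 hκ1 hSh in
lemma E1 {ϑ b : ℝ} (hd : ϑ₀ ≤ ϑ) (hbδ : δ ≤ b) :
    ∫ s in (0:ℝ)..b, (pI S h lam0 δ κ ϑ₀ ϑ s + qI S h lam0 δ κ ϑ₀ ϑ s) =
      gI S h lam0 δ κ ϑ₀ ϑ b - gI S h lam0 δ κ ϑ₀ ϑ 0 := by
  have hb0 : (0:ℝ) ≤ b := le_trans hδ.le hbδ
  apply intervalIntegral.integral_eq_sub_of_hasDeriv_right_of_le hb0
    ((cont_gI hS hlam0 hδ hκ0 hSh ϑ).continuousOn)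
    ?_ ((intInt_pI hS hlam0 hδ hκ0 hκ1 hSh hb0).add
      (intInt_qI hS hlam0 hδ hκ0 hκ1 hSh hd hb0))
  intro s hs
  have hs0 : 0 < s := hs.1
  have hy0 : 0 < s + ϑ - ϑ₀ := by linarith
  have hA : HasDerivWithinAt (fun s' => S * psi δ κ s' + lam0)
      (S * psid δ κ s) (Set.Ioi s) s :=
    (((hasDerivWithinAt_psi_Ici hδ hκ0 hs0).mono Set.Ioi_subset_Ici_self).const_mul
      S).add_const lam0
  have haff : HasDerivWithinAt (fun s' : ℝ => s' + ϑ - ϑ₀) 1 (Set.Ioi s) s := by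
    simpa using (((hasDerivAt_id s).add_const ϑ).sub_const ϑ₀).hasDerivWithinAt
  have hψy : HasDerivWithinAt (fun s' => psi δ κ (s' + ϑ - ϑ₀))
      (psid δ κ (s + ϑ - ϑ₀)) (Set.Ioi s) s := by
    have hmaps : Set.MapsTo (fun s' : ℝ => s' + ϑ - ϑ₀) (Set.Ioi s)
        (Set.Ici (s + ϑ - ϑ₀)) := fun u hu => by
      simp only [Set.mem_Ici]; simp only [Set.mem_Ioi] at hu; linarith
    have := (hasDerivWithinAt_psi_Ici hδ hκ0 hy0).comp s haff hmaps
    simpa [Function.comp_def] using this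
  have hB : HasDerivWithinAt (fun s' => (S + h) * psi δ κ (s' + ϑ - ϑ₀) + lam0)
      ((S + h) * psid δ κ (s + ϑ - ϑ₀)) (Set.Ioi s) s :=
    (hψy.const_mul (S + h)).add_const lam0
  have := hasDerivWithinAt_fKL hA hB (A_pos hS hlam0 hδ hκ0 s)
    (B_pos hlam0 hδ hκ0 hSh _)
  unfold gI pI qI
  convert this using 1

include hS hlam0 hδ hκ0 hκ1 hSh in
lemma intInt_V1 : IntervalIntegrable
    (fun y => S * κ * y ^ (κ - 1) * ((S + h) - S * y ^ κ) / (S * y ^ κ + lam0))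
    volume 0 1 := by
  apply IntervalIntegrable.mono_fun'
    (g := fun y => (S * κ * (2 * S + h) / lam0) * y ^ (κ - 1))
    ((intervalIntegral.intervalIntegrable_rpow' (by linarith)).const_mul _)
  · apply Measurable.aestronglyMeasurable
    apply Measurable.div
    · exact ((measurable_const.mul ((measurable_id.pow_const (κ-1)))).mul
        (measurable_const.sub (measurable_const.mul (measurable_id.pow_const κ))))
    · exact (measurable_const.mul (measurable_id.pow_const κ)).add measurable_const
  · apply (ae_restrict_iff' measurableSet_uIoc).2
    apply Filter.Eventually.of_forall
    intro y hy
    rw [Set.uIoc_of_le zero_le_one] at hy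
    have hy0 : 0 < y := hy.1
    have hy1 : y ≤ 1 := hy.2
    have hyκ : 0 ≤ y ^ κ := Real.rpow_nonneg hy0.le _
    have hyκ1 : y ^ κ ≤ 1 := Real.rpow_le_one hy0.le hy1 hκ0.le
    have hden : lam0 ≤ S * y ^ κ + lam0 := by nlinarith
    simp only [Real.norm_eq_abs]
    rw [abs_div]
    rw [abs_of_nonneg (by positivity : (0:ℝ) ≤ S * y ^ κ + lam0)]
    rw [div_le_iff₀ (by linarith)]
    have h1 : |S * κ * y ^ (κ - 1) * ((S + h) - S * y ^ κ)| ≤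
        S * κ * y ^ (κ - 1) * (2 * S + h) := by
      rw [abs_mul]
      have : |S * κ * y ^ (κ - 1)| = S * κ * y ^ (κ - 1) := by
        apply abs_of_nonneg
        apply mul_nonneg (mul_nonneg hS.le hκ0.le) (Real.rpow_nonneg hy0.le _)
      rw [this]
      apply mul_le_mul_of_nonneg_left _ (by
        apply mul_nonneg (mul_nonneg hS.le hκ0.le) (Real.rpow_nonneg hy0.le _))
      rw [abs_le]; constructor <;> nlinarith
    calc |S * κ * y ^ (κ - 1) * ((S + h) - S * y ^ κ)|
        ≤ S * κ * y ^ (κ - 1) * (2 * S + h) := h1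
      _ ≤ S * κ * (2 * S + h) / lam0 * y ^ (κ - 1) * (S * y ^ κ + lam0) := by
          rw [div_mul_eq_mul_div, div_mul_eq_mul_div, le_div_iff₀ hlam0]
          have h2 : 0 ≤ y ^ (κ - 1) := Real.rpow_nonneg hy0.le _
          nlinarith [mul_nonneg (mul_nonneg (mul_nonneg (mul_nonneg hS.le hκ0.le)
            (by linarith : (0:ℝ) ≤ 2 * S + h)) h2) (mul_nonneg hS.le hyκ)]
include hS hlam0 hδ hκ0 hκ1 hSh in
lemma E2_tail {m : ℝ} (hm0 : 0 ≤ m) (hm1 : m ≤ 1) :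
    ∫ y in m..1, S * κ * y ^ (κ - 1) * ((S + h) - S * y ^ κ) / (S * y ^ κ + lam0)
      = (S + h + lam0) * Real.log ((S + lam0) / (S * m ^ κ + lam0)) + S * m ^ κ - S := by
  have hyc : Continuous fun y : ℝ => y ^ κ :=
    continuous_id.rpow_const (fun x => Or.inr hκ0.le)
  have hpos : ∀ y : ℝ, 0 ≤ y → 0 < S * y ^ κ + lam0 := fun y hy =>
    add_pos_of_nonneg_of_pos (mul_nonneg hS.le (Real.rpow_nonneg hy _)) hlam0
  have key := intervalIntegral.integral_eq_sub_of_hasDeriv_right_of_le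
    (f := fun y => (S + h + lam0) * Real.log (S * y ^ κ + lam0) - S * y ^ κ)
    (f' := fun y => S * κ * y ^ (κ - 1) * ((S + h) - S * y ^ κ) / (S * y ^ κ + lam0))
    hm1 ?_ ?_ ?_
  · rw [key]
    simp only [Real.one_rpow, mul_one]
    rw [Real.log_div (by positivity : (S + lam0) ≠ 0)
      (hpos m hm0).ne']
    ring
  · apply ContinuousOn.sub
    · apply continuousOn_const.mul
      apply ContinuousOn.log ((continuous_const.mul hyc).add continuous_const).continuousOn
      intro y hy
      exact (hpos y (le_trans hm0 hy.1)).ne'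
    · exact (continuous_const.mul hyc).continuousOn
  · intro y hy
    have hy0 : 0 < y := lt_of_le_of_lt hm0 hy.1
    have hrp : HasDerivAt (fun y : ℝ => y ^ κ) (κ * y ^ (κ - 1)) y :=
      Real.hasDerivAt_rpow_const (Or.inl hy0.ne')
    have hinner : HasDerivAt (fun y : ℝ => S * y ^ κ + lam0) (S * (κ * y ^ (κ - 1))) y :=
      (hrp.const_mul S).add_const lam0
    have hlog : HasDerivAt (fun y : ℝ => Real.log (S * y ^ κ + lam0))
        ((S * (κ * y ^ (κ - 1))) / (S * y ^ κ + lam0)) y :=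
      hinner.log (hpos y hy0.le).ne'
    have hΦ : HasDerivAt (fun y : ℝ => (S + h + lam0) * Real.log (S * y ^ κ + lam0)
        - S * y ^ κ)
        ((S + h + lam0) * ((S * (κ * y ^ (κ - 1))) / (S * y ^ κ + lam0))
          - S * (κ * y ^ (κ - 1))) y :=
      (hlog.const_mul _).sub (hrp.const_mul S)
    have heq : (S + h + lam0) * ((S * (κ * y ^ (κ - 1))) / (S * y ^ κ + lam0))
        - S * (κ * y ^ (κ - 1)) =
        S * κ * y ^ (κ - 1) * ((S + h) - S * y ^ κ) / (S * y ^ κ + lam0) := by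
      field_simp
      ring
    rw [heq] at hΦ
    exact hΦ.hasDerivWithinAt
  · apply (intInt_V1 hS hlam0 hδ hκ0 hκ1 hSh).mono_set
    rw [Set.uIcc_of_le hm1, Set.uIcc_of_le zero_le_one]
    exact Set.Icc_subset_Icc hm0 le_rfl

set_option maxHeartbeats 1000000 in
include hS hlam0 hδ hκ0 hκ1 hSh in
lemma E2 {ϑ b : ℝ} (hd : ϑ₀ ≤ ϑ) (hdδ : ϑ - ϑ₀ ≤ δ) (hbδ : δ ≤ b) :
    -(∫ s in (0:ℝ)..b, pI S h lam0 δ κ ϑ₀ ϑ s) =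
      (S + h + lam0) * Real.log ((S + lam0) / (S * (1 - (ϑ - ϑ₀) / δ) ^ κ + lam0)) +
        S * (1 - (ϑ - ϑ₀) / δ) ^ κ - S +
        ∫ x in (0:ℝ)..(1 - (ϑ - ϑ₀) / δ), S * κ * x ^ (κ - 1) *
          ((S + h) * (x + (ϑ - ϑ₀) / δ) ^ κ - S * x ^ κ) / (S * x ^ κ + lam0) := by
  have hb0 : (0:ℝ) ≤ b := le_trans hδ.le hbδ
  set m : ℝ := 1 - (ϑ - ϑ₀) / δ with hmdef
  have hm0 : 0 ≤ m := by
    have : (ϑ - ϑ₀) / δ ≤ 1 := (div_le_one hδ).2 (by linarith)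
    simp only [hmdef]; linarith
  have hm1 : m ≤ 1 := by
    have : 0 ≤ (ϑ - ϑ₀) / δ := div_nonneg (by linarith) hδ.le
    simp only [hmdef]; linarith
  set W : ℝ → ℝ := fun y => S * κ * y ^ (κ - 1) *
    ((S + h) * psi δ κ (δ * y + ϑ - ϑ₀) - S * y ^ κ) / (S * y ^ κ + lam0) with hWdef
  have hWmeas : Measurable W := by
    apply Measurable.div
    · exact ((measurable_const.mul (measurable_id.pow_const (κ-1))).mul
        ((measurable_const.mul ((measurable_psi (δ := δ) (κ := κ)).comp
          (((measurable_id.const_mul δ).add measurable_const).sub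
            measurable_const))).sub (measurable_const.mul (measurable_id.pow_const κ))))
    · exact (measurable_const.mul (measurable_id.pow_const κ)).add measurable_const
  have hWint : IntervalIntegrable W volume 0 1 := by
    apply IntervalIntegrable.mono_fun'
      (g := fun y => (S * κ * (2 * S + h) / lam0) * y ^ (κ - 1))
      ((intervalIntegral.intervalIntegrable_rpow' (by linarith)).const_mul _)
      hWmeas.aestronglyMeasurable
    apply (ae_restrict_iff' measurableSet_uIoc).2
    apply Filter.Eventually.of_forall
    intro y hy
    rw [Set.uIoc_of_le zero_le_one] at hy
    have hy0 : 0 < y := hy.1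
    have hy1 : y ≤ 1 := hy.2
    have hyκ : 0 ≤ y ^ κ := Real.rpow_nonneg hy0.le _
    have hyκ1 : y ^ κ ≤ 1 := Real.rpow_le_one hy0.le hy1 hκ0.le
    have hψ0 : 0 ≤ psi δ κ (δ * y + ϑ - ϑ₀) := psi_nonneg hδ
    have hψ1 : psi δ κ (δ * y + ϑ - ϑ₀) ≤ 1 := psi_le_one hδ hκ0
    simp only [Real.norm_eq_abs, hWdef]
    rw [abs_div]
    rw [abs_of_nonneg (by positivity : (0:ℝ) ≤ S * y ^ κ + lam0)]
    rw [div_le_iff₀ (by nlinarith)]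
    have hc0 : 0 ≤ S * κ * y ^ (κ - 1) :=
      mul_nonneg (mul_nonneg hS.le hκ0.le) (Real.rpow_nonneg hy0.le _)
    have h1 : |S * κ * y ^ (κ - 1) * ((S + h) * psi δ κ (δ * y + ϑ - ϑ₀) - S * y ^ κ)|
        ≤ S * κ * y ^ (κ - 1) * (2 * S + h) := by
      rw [abs_mul, abs_of_nonneg hc0]
      apply mul_le_mul_of_nonneg_left _ hc0
      rw [abs_le]; constructor <;> nlinarith
    calc |S * κ * y ^ (κ - 1) * ((S + h) * psi δ κ (δ * y + ϑ - ϑ₀) - S * y ^ κ)|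
        ≤ S * κ * y ^ (κ - 1) * (2 * S + h) := h1
      _ ≤ S * κ * (2 * S + h) / lam0 * y ^ (κ - 1) * (S * y ^ κ + lam0) := by
          rw [div_mul_eq_mul_div, div_mul_eq_mul_div, le_div_iff₀ hlam0]
          have h2 : 0 ≤ y ^ (κ - 1) := Real.rpow_nonneg hy0.le _
          nlinarith [mul_nonneg (mul_nonneg (mul_nonneg (mul_nonneg hS.le hκ0.le)
            (by linarith : (0:ℝ) ≤ 2 * S + h)) h2) (mul_nonneg hS.le hyκ)]
  -- Step A : reduce to [0, δ]
  have hpI0δ : IntervalIntegrable (fun s => pI S h lam0 δ κ ϑ₀ ϑ s) volume 0 δ :=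
    intInt_pI hS hlam0 hδ hκ0 hκ1 hSh hδ.le
  have hpIδb : IntervalIntegrable (fun s => pI S h lam0 δ κ ϑ₀ ϑ s) volume δ b :=
    (intInt_pI hS hlam0 hδ hκ0 hκ1 hSh hb0).mono_set
      (by rw [Set.uIcc_of_le hbδ, Set.uIcc_of_le hb0]
          exact Set.Icc_subset_Icc hδ.le le_rfl)
  have hstepA : ∫ s in (0:ℝ)..b, pI S h lam0 δ κ ϑ₀ ϑ s =
      ∫ s in (0:ℝ)..δ, pI S h lam0 δ κ ϑ₀ ϑ s := by
    rw [← intervalIntegral.integral_add_adjacent_intervals hpI0δ hpIδb]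
    have : ∫ s in δ..b, pI S h lam0 δ κ ϑ₀ ϑ s = 0 := by
      rw [intervalIntegral.integral_congr (g := fun _ => (0:ℝ)) ?_,
        intervalIntegral.integral_zero]
      intro s hs
      rw [Set.uIcc_of_le hbδ] at hs
      have hψd : psid δ κ s = 0 := by
        unfold psid; rw [if_neg (by rintro ⟨-, w⟩; linarith [hs.1])]
      unfold pI; rw [hψd]; ring
    rw [this, add_zero]
  -- Step B : change of variables s = δ y
  have hstepB : ∫ s in (0:ℝ)..δ, pI S h lam0 δ κ ϑ₀ ϑ s = -∫ y in (0:ℝ)..1, W y := by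
    have hsub := intervalIntegral.smul_integral_comp_mul_left
      (a := (0:ℝ)) (b := 1) (fun s => pI S h lam0 δ κ ϑ₀ ϑ s) δ
    simp only [mul_zero, mul_one] at hsub
    rw [← hsub, ← intervalIntegral.integral_smul]
    have : -∫ y in (0:ℝ)..1, W y = ∫ y in (0:ℝ)..1, -W y :=
      (intervalIntegral.integral_neg).symm
    rw [this]
    apply intervalIntegral.integral_congr_ae
    have hne : ∀ᵐ y : ℝ, y ≠ 1 := by
      rw [ae_iff]; simpa using measure_singleton (α := ℝ) 1
    filter_upwards [hne] with y hyne hymem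
    rw [Set.uIoc_of_le zero_le_one] at hymem
    have hy0 : 0 < y := hymem.1
    have hy1 : y < 1 := lt_of_le_of_ne hymem.2 hyne
    have hδy0 : 0 < δ * y := mul_pos hδ hy0
    have hδyδ : δ * y < δ := by nlinarith
    have hψd : psid δ κ (δ * y) = κ / δ * y ^ (κ - 1) := by
      unfold psid; rw [if_pos ⟨hδy0, hδyδ⟩, mul_div_cancel_left₀ _ hδ.ne']
    have hψv : psi δ κ (δ * y) = y ^ κ := by
      rw [psi_of_mem hδ hκ0 hδy0.le hδyδ.le, mul_div_cancel_left₀ _ hδ.ne']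
    have hden : 0 < S * y ^ κ + lam0 :=
      add_pos_of_nonneg_of_pos (mul_nonneg hS.le (Real.rpow_nonneg hy0.le _)) hlam0
    show δ • pI S h lam0 δ κ ϑ₀ ϑ (δ * y) = -W y
    unfold pI
    rw [hψd, hψv, smul_eq_mul, hWdef]
    field_simp
    ring
  -- Step C : split at m
  have hWint0m : IntervalIntegrable W volume 0 m :=
    hWint.mono_set (by rw [Set.uIcc_of_le hm0, Set.uIcc_of_le zero_le_one]
                       exact Set.Icc_subset_Icc le_rfl hm1)
  have hWintm1 : IntervalIntegrable W volume m 1 :=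
    hWint.mono_set (by rw [Set.uIcc_of_le hm1, Set.uIcc_of_le zero_le_one]
                       exact Set.Icc_subset_Icc hm0 le_rfl)
  have hstepC : ∫ y in (0:ℝ)..1, W y = (∫ y in (0:ℝ)..m, W y) + ∫ y in m..1, W y :=
    (intervalIntegral.integral_add_adjacent_intervals hWint0m hWintm1).symm
  -- Step D : identify head with the goal integral
  have hstepD : ∫ y in (0:ℝ)..m, W y = ∫ x in (0:ℝ)..m, S * κ * x ^ (κ - 1) *
      ((S + h) * (x + (ϑ - ϑ₀) / δ) ^ κ - S * x ^ κ) / (S * x ^ κ + lam0) := by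
    apply intervalIntegral.integral_congr
    intro y hy
    rw [Set.uIcc_of_le hm0] at hy
    have hy0 : 0 ≤ y := hy.1
    have hym : y ≤ m := hy.2
    have harg0 : 0 ≤ δ * y + ϑ - ϑ₀ := by nlinarith
    have hargδ : δ * y + ϑ - ϑ₀ ≤ δ := by
      have : δ * y ≤ δ * m := by nlinarith
      have hδm : δ * m = δ - (ϑ - ϑ₀) := by
        rw [hmdef]; field_simp
      nlinarith
    simp only [hWdef]
    rw [psi_of_mem hδ hκ0 harg0 hargδ,
      show (δ * y + ϑ - ϑ₀) / δ = y + (ϑ - ϑ₀) / δ by field_simp; ring]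
  -- Step E : identify tail with V1
  have hstepE : ∫ y in m..1, W y = ∫ y in m..1,
      S * κ * y ^ (κ - 1) * ((S + h) - S * y ^ κ) / (S * y ^ κ + lam0) := by
    apply intervalIntegral.integral_congr
    intro y hy
    rw [Set.uIcc_of_le hm1] at hy
    have hym : m ≤ y := hy.1
    have harg : δ ≤ δ * y + ϑ - ϑ₀ := by
      have : δ * m ≤ δ * y := by nlinarith
      have hδm : δ * m = δ - (ϑ - ϑ₀) := by
        rw [hmdef]; field_simp
      nlinarith
    simp only [hWdef]
    rw [psi_of_ge harg, mul_one]
  rw [hstepA, hstepB, neg_neg, hstepC, hstepD, hstepE,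
    E2_tail hS hlam0 hδ hκ0 hκ1 hSh hm0 hm1]
  ring

end main


/-- Theoretical intensity `λ(ϑ, t) = S ψ(t − ϑ) + λ₀`. -/
noncomputable def lamT (S lam0 δ κ : ℝ) (ϑ t : ℝ) : ℝ :=
  S * psi δ κ (t - ϑ) + lam0

/-- Real intensity `λ*(ϑ₀, t) = (S + h) ψ(t − ϑ₀) + λ₀`. -/
noncomputable def lamR (S h lam0 δ κ : ℝ) (ϑ₀ t : ℝ) : ℝ :=
  (S + h) * psi δ κ (t - ϑ₀) + lam0

/-- The Kullback–Leibler divergence `J(ϑ)`. -/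
noncomputable def JKL (S h lam0 δ κ τ ϑ₀ : ℝ) (ϑ : ℝ) : ℝ :=
  ∫ t in (min ϑ ϑ₀)..τ,
    (lamT S lam0 δ κ ϑ t / lamR S h lam0 δ κ ϑ₀ t - 1 -
      Real.log (lamT S lam0 δ κ ϑ t / lamR S h lam0 δ κ ϑ₀ t)) *
      lamR S h lam0 δ κ ϑ₀ t

set_option maxHeartbeats 1000000 in
theorem stmt_3 (S lam0 δ τ κ α β ϑ₀ h : ℝ)
    (hS : 0 < S) (hlam0 : 0 < lam0) (hδ : 0 < δ) (hτ : 0 < τ)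
    (hκ : κ ∈ Set.Ioo (0 : ℝ) (1 / 2)) (hαβ : α < β)
    (hΘ : Set.Ioo (α - δ) (β + δ) ⊆ Set.Ioo 0 (τ - δ))
    (hϑ₀ : ϑ₀ ∈ Set.Ioo α β)
    (hH : S / Real.log (1 + S / lam0) - S - lam0 < h) :
    ∀ ϑ ∈ Set.Icc ϑ₀ (ϑ₀ + δ),
      HasDerivAt (JKL S h lam0 δ κ τ ϑ₀)
        ((S + h + lam0) *
            Real.log ((S + lam0) / (S * (1 - (ϑ - ϑ₀) / δ) ^ κ + lam0)) +
          S * (1 - (ϑ - ϑ₀) / δ) ^ κ - S +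
          ∫ x in (0 : ℝ)..(1 - (ϑ - ϑ₀) / δ),
            S * κ * x ^ (κ - 1) *
              ((S + h) * (x + (ϑ - ϑ₀) / δ) ^ κ - S * x ^ κ) / (S * x ^ κ + lam0)) ϑ := by
  intro ϑ hϑ
  obtain ⟨hκ0, hκhalf⟩ := hκ
  have hκ1 : κ < 1 := by linarith
  obtain ⟨hϑl, hϑu⟩ := hϑ
  have hsub := (Set.Ioo_subset_Ioo_iff (by linarith : α - δ < β + δ)).1 hΘ
  have hβτ : β + δ ≤ τ - δ := hsub.2
  -- S + h > 0
  have hr1 : (1:ℝ) < 1 + S / lam0 := by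
    have := div_pos hS hlam0; linarith
  have hlog1 : 0 < Real.log (1 + S / lam0) := Real.log_pos hr1
  have hloglt : Real.log (1 + S / lam0) < S / lam0 := by
    have := Real.log_lt_sub_one_of_pos (by linarith : (0:ℝ) < 1 + S / lam0)
      (by linarith : (1:ℝ) + S / lam0 ≠ 1)
    linarith
  have hSh : 0 < S + h := by
    have h1 : lam0 < S / Real.log (1 + S / lam0) := by
      rw [lt_div_iff₀ hlog1]
      calc lam0 * Real.log (1 + S / lam0) < lam0 * (S / lam0) :=
            mul_lt_mul_of_pos_left hloglt hlam0
        _ = S := by field_simp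
    linarith
  -- geometry
  have hγ : 0 < τ - ϑ₀ - 2 * δ := by
    have : ϑ₀ < β := hϑ₀.2
    linarith
  set r : ℝ := (τ - ϑ₀ - 2 * δ) / 4 with hrdef
  have hr : 0 < r := by positivity
  set bb : ℝ := δ + r with hbbdef
  have hδbb : δ ≤ bb := by simp only [hbbdef]; linarith
  have hbb0 : 0 < bb := by linarith
  set c : ℝ := fKL (S + lam0) (S + h + lam0) with hcdef
  set Gfn : ℝ → ℝ := fun t => fKL lam0 ((S + h) * psi δ κ (t - ϑ₀) + lam0) with hGdef
  have hGcont : Continuous Gfn := by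
    apply continuous_fKL continuous_const
    · exact (continuous_const.mul ((continuous_psi hδ hκ0).comp
        (continuous_id.sub continuous_const))).add continuous_const
    · exact fun _ => hlam0
    · exact fun t => B_pos hlam0 hδ hκ0 hSh _
  have hFcont : ∀ ϑ' : ℝ, Continuous fun t =>
      fKL (S * psi δ κ (t - ϑ') + lam0) ((S + h) * psi δ κ (t - ϑ₀) + lam0) := by
    intro ϑ'
    apply continuous_fKL
    · exact (continuous_const.mul ((continuous_psi hδ hκ0).comp
        (continuous_id.sub continuous_const))).add continuous_const
    · exact (continuous_const.mul ((continuous_psi hδ hκ0).comp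
        (continuous_id.sub continuous_const))).add continuous_const
    · exact fun t => A_pos hS hlam0 hδ hκ0 _
    · exact fun t => B_pos hlam0 hδ hκ0 hSh _
  -- local representation of JKL near ϑ
  have hJ : ∀ ϑ' ∈ Metric.ball ϑ r, JKL S h lam0 δ κ τ ϑ₀ ϑ' =
      (∫ t in ϑ₀..ϑ', Gfn t) + (∫ s in (0:ℝ)..bb, gI S h lam0 δ κ ϑ₀ ϑ' s) +
        (τ - ϑ' - bb) * c := by
    intro ϑ' hball
    rw [Metric.mem_ball, Real.dist_eq] at hball
    have hb1 := abs_lt.1 hball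
    have hϑ'l : ϑ₀ - r < ϑ' := by linarith
    have hτϑ' : bb ≤ τ - ϑ' := by
      simp only [hbbdef, hrdef] at *
      linarith
    have hrfl : JKL S h lam0 δ κ τ ϑ₀ ϑ' = ∫ t in (min ϑ' ϑ₀)..τ,
        fKL (S * psi δ κ (t - ϑ') + lam0) ((S + h) * psi δ κ (t - ϑ₀) + lam0) := rfl
    rw [hrfl]
    rw [← intervalIntegral.integral_add_adjacent_intervals
      ((hFcont ϑ').intervalIntegrable (min ϑ' ϑ₀) ϑ')
      ((hFcont ϑ').intervalIntegrable ϑ' τ)]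
    have hhead : ∫ t in (min ϑ' ϑ₀)..ϑ',
        fKL (S * psi δ κ (t - ϑ') + lam0) ((S + h) * psi δ κ (t - ϑ₀) + lam0) =
        ∫ t in ϑ₀..ϑ', Gfn t := by
      have hmax : max (min ϑ' ϑ₀) ϑ' = ϑ' := max_eq_right (min_le_left _ _)
      have e : Set.EqOn (fun t =>
          fKL (S * psi δ κ (t - ϑ') + lam0) ((S + h) * psi δ κ (t - ϑ₀) + lam0))
          Gfn (Set.uIcc (min ϑ' ϑ₀) ϑ') := by
        intro t ht
        have htle : t ≤ ϑ' := by
          have := ht.2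
          rw [Set.uIcc, hmax] at ht
          exact ht.2
        simp only [hGdef]
        rw [psi_of_nonpos hδ (by linarith : t - ϑ' ≤ 0), mul_zero, zero_add]
      rw [intervalIntegral.integral_congr e]
      rcases le_total ϑ₀ ϑ' with hc | hc
      · rw [min_eq_right hc]
      · rw [min_eq_left hc, intervalIntegral.integral_same]
        symm
        rw [intervalIntegral.integral_congr (g := fun _ => (0:ℝ)) ?_,
          intervalIntegral.integral_zero]
        intro t ht
        have ht0 : t ≤ ϑ₀ := by
          rw [Set.uIcc_of_ge hc] at ht
          exact ht.2
        simp only [hGdef]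
        rw [psi_of_nonpos hδ (by linarith : t - ϑ₀ ≤ 0), mul_zero, zero_add]
        exact fKL_self hlam0
    have htail : ∫ t in ϑ'..τ,
        fKL (S * psi δ κ (t - ϑ') + lam0) ((S + h) * psi δ κ (t - ϑ₀) + lam0) =
        (∫ s in (0:ℝ)..bb, gI S h lam0 δ κ ϑ₀ ϑ' s) + (τ - ϑ' - bb) * c := by
      have hcomp := intervalIntegral.integral_comp_add_right (a := (0:ℝ)) (b := τ - ϑ')
        (f := fun t => fKL (S * psi δ κ (t - ϑ') + lam0)
          ((S + h) * psi δ κ (t - ϑ₀) + lam0)) ϑ'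
      rw [zero_add, sub_add_cancel] at hcomp
      rw [← hcomp]
      have e2 : Set.EqOn (fun x : ℝ =>
          fKL (S * psi δ κ (x + ϑ' - ϑ') + lam0) ((S + h) * psi δ κ (x + ϑ' - ϑ₀) + lam0))
          (fun x => gI S h lam0 δ κ ϑ₀ ϑ' x) (Set.uIcc 0 (τ - ϑ')) := by
        intro x _
        simp only [add_sub_cancel_right]
        rfl
      rw [intervalIntegral.integral_congr e2]
      rw [← intervalIntegral.integral_add_adjacent_intervals
        ((cont_gI hS hlam0 hδ hκ0 hSh ϑ').intervalIntegrable 0 bb)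
        ((cont_gI hS hlam0 hδ hκ0 hSh ϑ').intervalIntegrable bb (τ - ϑ'))]
      congr 1
      rw [intervalIntegral.integral_congr (g := fun _ => c) ?_]
      · rw [intervalIntegral.integral_const, smul_eq_mul]
      · intro s hs
        rw [Set.uIcc_of_le hτϑ'] at hs
        have hs1 : bb ≤ s := hs.1
        unfold gI
        rw [psi_of_ge (by linarith : δ ≤ s),
          psi_of_ge (by
            simp only [hbbdef] at hs1
            linarith : δ ≤ s + ϑ' - ϑ₀), mul_one, mul_one]
    rw [hhead, htail]
    ring
  -- derivatives of the three pieces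
  have hHd : HasDerivAt (fun ϑ' => ∫ t in ϑ₀..ϑ', Gfn t) (Gfn ϑ) ϑ :=
    (hGcont.integral_hasStrictDerivAt ϑ₀ ϑ).hasDerivAt
  have hPd : HasDerivAt (fun ϑ' => ∫ s in (0:ℝ)..bb, gI S h lam0 δ κ ϑ₀ ϑ' s)
      (∫ s in (0:ℝ)..bb, qI S h lam0 δ κ ϑ₀ ϑ s) ϑ := by
    rcases eq_or_lt_of_le hϑl with heq | hlt
    · rw [← heq]
      exact hasDerivAt_P0 hS hlam0 hδ hκ0 hκ1 hSh hbb0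
    · exact hasDerivAt_P hS hlam0 hδ hκ0 hκ1 hSh hbb0.le (by linarith)
  have hLd : HasDerivAt (fun ϑ' => (τ - ϑ' - bb) * c) (-c) ϑ := by
    have h1 : HasDerivAt (fun ϑ' : ℝ => τ - ϑ' - bb) (-1) ϑ := by
      simpa using (((hasDerivAt_id ϑ).const_sub τ).sub_const bb)
    have := h1.mul_const c
    simpa using this
  have hW : HasDerivAt (fun ϑ' => (∫ t in ϑ₀..ϑ', Gfn t) +
      (∫ s in (0:ℝ)..bb, gI S h lam0 δ κ ϑ₀ ϑ' s) + (τ - ϑ' - bb) * c)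
      (Gfn ϑ + (∫ s in (0:ℝ)..bb, qI S h lam0 δ κ ϑ₀ ϑ s) + -c) ϑ :=
    (hHd.add hPd).add hLd
  have hev : JKL S h lam0 δ κ τ ϑ₀ =ᶠ[nhds ϑ] fun ϑ' => (∫ t in ϑ₀..ϑ', Gfn t) +
      (∫ s in (0:ℝ)..bb, gI S h lam0 δ κ ϑ₀ ϑ' s) + (τ - ϑ' - bb) * c := by
    filter_upwards [Metric.ball_mem_nhds ϑ hr] with x hx using hJ x hx
  have hJd := hW.congr_of_eventuallyEq hev
  -- compute the derivative value
  have hgI0 : gI S h lam0 δ κ ϑ₀ ϑ 0 = Gfn ϑ := by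
    unfold gI
    simp only [hGdef]
    rw [psi_of_nonpos hδ le_rfl, mul_zero, zero_add,
      show (0:ℝ) + ϑ - ϑ₀ = ϑ - ϑ₀ by ring]
  have hgIb : gI S h lam0 δ κ ϑ₀ ϑ bb = c := by
    unfold gI
    simp only [hcdef]
    rw [psi_of_ge hδbb, psi_of_ge (by linarith : δ ≤ bb + ϑ - ϑ₀), mul_one, mul_one]
  have hE1 := E1 hS hlam0 hδ hκ0 hκ1 hSh hϑl hδbb
  have hsplit : ∫ s in (0:ℝ)..bb, (pI S h lam0 δ κ ϑ₀ ϑ s + qI S h lam0 δ κ ϑ₀ ϑ s) =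
      (∫ s in (0:ℝ)..bb, pI S h lam0 δ κ ϑ₀ ϑ s) +
        ∫ s in (0:ℝ)..bb, qI S h lam0 δ κ ϑ₀ ϑ s :=
    intervalIntegral.integral_add (intInt_pI hS hlam0 hδ hκ0 hκ1 hSh hbb0.le)
      (intInt_qI hS hlam0 hδ hκ0 hκ1 hSh hϑl hbb0.le)
  have hqval : ∫ s in (0:ℝ)..bb, qI S h lam0 δ κ ϑ₀ ϑ s =
      c - Gfn ϑ - ∫ s in (0:ℝ)..bb, pI S h lam0 δ κ ϑ₀ ϑ s := by
    rw [hsplit] at hE1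
    rw [hgI0, hgIb] at hE1
    linarith
  have hE2 := E2 hS hlam0 hδ hκ0 hκ1 hSh hϑl (by linarith) hδbb
  refine hJd.congr_deriv ?_
  rw [hqval, ← hE2]
  ring
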